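/- Let Ω ∈ (0, π] and let x ∈ ℓ²(ℤ; ℂ). Then for every integer k the series c_k = (Ω/π) · Σ_{t∈ℤ} sinc(kπ + Ωt) · x(t) converges absolutely, and Σ_{k∈ℤ} |c_k|² ≤ (Ω/π) · Σ_{t∈ℤ} |x(t)|². In particular the map x ↦ (c_k)_{k∈ℤ} is a bounded linear operator from ℓ²(ℤ) to ℓ²(ℤ). -/

import Mathlib

noncomputable def sinc (x : ℝ) : ℝ := if x = 0 then 1 else Real.sin x / x

open MeasureTheory Set Complex

namespace SincAux

lemma sinc_int_mul_pi (n : ℤ) : sinc (n * Real.pi) = if n = 0 then 1 else 0 := by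
  split_ifs with h
  · subst h; simp [sinc]
  · have hπ : (n : ℝ) * Real.pi ≠ 0 :=
      mul_ne_zero (by exact_mod_cast h) Real.pi_ne_zero
    simp [sinc, hπ, Real.sin_int_mul_pi]

noncomputable def phi (s a : ℝ) : ℝ → ℂ :=
  (Set.Ioc (-s) s).indicator fun ξ : ℝ => Complex.exp ((a * ξ : ℝ) * Complex.I)

lemma memℒp_phi (s a : ℝ) : MemLp (phi s a) 2 (volume : Measure ℝ) := by
  rw [phi, memLp_indicator_iff_restrict measurableSet_Ioc]
  haveI : IsFiniteMeasure ((volume : Measure ℝ).restrict (Set.Ioc (-s) s)) := by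
    constructor
    rw [Measure.restrict_apply_univ]
    exact measure_Ioc_lt_top
  refine MemLp.of_bound ?_ 1 ?_
  · exact (Complex.continuous_exp.comp
      ((Complex.continuous_ofReal.comp (continuous_const.mul continuous_id)).mul
        continuous_const)).aestronglyMeasurable
  · filter_upwards with ξ
    rw [Complex.norm_exp_ofReal_mul_I]

lemma integral_phi {s : ℝ} (hs : 0 < s) (a : ℝ) :
    ∫ ξ, phi s a ξ = ((2 * s * sinc (a * s) : ℝ) : ℂ) := by
  rw [phi, MeasureTheory.integral_indicator measurableSet_Ioc,
    ← intervalIntegral.integral_of_le (by linarith : -s ≤ s)]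
  rcases eq_or_ne a 0 with h | h
  · subst h
    simp [sinc]
    all_goals ring
  · have hc : ((a : ℂ) * Complex.I) ≠ 0 :=
      mul_ne_zero (by exact_mod_cast h) Complex.I_ne_zero
    have hcong : ∀ ξ ∈ Set.uIcc (-s) s,
        Complex.exp ((a * ξ : ℝ) * Complex.I) = Complex.exp (((a:ℂ) * Complex.I) * ξ) := by
      intro ξ _; push_cast; ring_nf
    rw [intervalIntegral.integral_congr hcong, integral_exp_mul_complex hc]
    have has : a * s ≠ 0 := mul_ne_zero h hs.ne'
    rw [sinc, if_neg has]
    have h1 : (a:ℂ) * Complex.I * s = ((a*s : ℝ) : ℂ) * Complex.I := by push_cast; ring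
    have h2 : (a:ℂ) * Complex.I * (-s : ℝ) = ((-(a*s) : ℝ) : ℂ) * Complex.I := by push_cast; ring
    rw [h1, h2, Complex.exp_mul_I, Complex.exp_mul_I]
    push_cast
    simp only [Complex.cos_neg, Complex.sin_neg]
    have hI := Complex.I_ne_zero
    have ha : (a : ℂ) ≠ 0 := by exact_mod_cast h
    have hs' : (s : ℂ) ≠ 0 := by exact_mod_cast hs.ne'
    field_simp
    ring_nf
    all_goals simp [Complex.I_sq]

lemma phi_mul {s s' : ℝ} (hss' : s ≤ s') (a b : ℝ) (ξ : ℝ) :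
    (starRingEnd ℂ) (phi s a ξ) * phi s' b ξ = phi s (b - a) ξ := by
  unfold phi
  by_cases hmem : ξ ∈ Set.Ioc (-s) s
  · have hmem' : ξ ∈ Set.Ioc (-s') s' :=
      ⟨lt_of_le_of_lt (by linarith) hmem.1, hmem.2.trans hss'⟩
    rw [Set.indicator_of_mem hmem, Set.indicator_of_mem hmem', Set.indicator_of_mem hmem,
      ← Complex.exp_conj, ← Complex.exp_add]
    congr 1
    simp only [map_mul, Complex.conj_ofReal, Complex.conj_I]
    push_cast
    ring
  · rw [Set.indicator_of_notMem hmem, Set.indicator_of_notMem hmem, map_zero, zero_mul]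

lemma inner_phi {s s' : ℝ} (hs : 0 < s) (hss' : s ≤ s') (a b : ℝ) :
    (inner ℂ ((memℒp_phi s a).toLp _) ((memℒp_phi s' b).toLp _) : ℂ)
      = ((2 * s * sinc ((b - a) * s) : ℝ) : ℂ) := by
  rw [L2.inner_def]
  have h1 := (memℒp_phi s a).coeFn_toLp
  have h2 := (memℒp_phi s' b).coeFn_toLp
  have h3 : ∫ ξ, (inner ℂ ((memℒp_phi s a).toLp (phi s a) ξ)
      ((memℒp_phi s' b).toLp (phi s' b) ξ) : ℂ) ∂(volume : Measure ℝ)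
      = ∫ ξ, phi s (b - a) ξ := by
    refine integral_congr_ae ?_
    filter_upwards [h1, h2] with ξ e1 e2
    rw [e1, e2, RCLike.inner_apply, mul_comm, phi_mul hss']
  rw [h3, integral_phi hs]

end SincAux

theorem sinc_convolution_bounded_on_l2
    (Ω : ℝ) (hΩ : Ω ∈ Set.Ioc 0 Real.pi) (x : ℤ → ℂ)
    (hx : Summable fun t : ℤ => norm (x t) ^ 2) :
    (∀ k : ℤ, Summable fun t : ℤ =>
      norm (((sinc ((k : ℝ) * Real.pi + Ω * t)) : ℂ) * x t)) ∧
    Summable (fun k : ℤ =>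
      norm (((Ω / Real.pi : ℝ) : ℂ) *
        ∑' t : ℤ, ((sinc ((k : ℝ) * Real.pi + Ω * t)) : ℂ) * x t) ^ 2) ∧
    ∑' k : ℤ, norm (((Ω / Real.pi : ℝ) : ℂ) *
        ∑' t : ℤ, ((sinc ((k : ℝ) * Real.pi + Ω * t)) : ℂ) * x t) ^ 2 ≤
      (Ω / Real.pi) * ∑' t : ℤ, norm (x t) ^ 2 := by
  obtain ⟨hΩ0, hΩπ⟩ := hΩ
  have hπ0 : (0:ℝ) < Real.pi := Real.pi_pos
  set r : ℝ := Real.sqrt (Ω / Real.pi) with hr_def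
  have hr0 : 0 < r := Real.sqrt_pos.mpr (div_pos hΩ0 hπ0)
  have hr2 : r ^ 2 = Ω / Real.pi := Real.sq_sqrt (div_pos hΩ0 hπ0).le
  set H := Lp ℂ 2 (volume : Measure ℝ) with hH_def
  set W : ℤ → H := fun t =>
    (((Real.sqrt (2*Real.pi))⁻¹ : ℝ) : ℂ) • (SincAux.memℒp_phi Real.pi t).toLp _ with hW_def
  set E : ℤ → H := fun k =>
    (((Real.sqrt (2*Ω))⁻¹ : ℝ) : ℂ) •
      (SincAux.memℒp_phi Ω (-(k*Real.pi/Ω))).toLp _ with hE_def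
  have hsq : ∀ y s : ℝ, 0 < y → (Real.sqrt y)⁻¹ * ((Real.sqrt y)⁻¹ * (y * s)) = s := by
    intro y s hy
    have h := Real.mul_self_sqrt hy.le
    have hne : Real.sqrt y ≠ 0 := (Real.sqrt_pos.mpr hy).ne'
    rw [← mul_assoc, ← mul_inv, h, inv_mul_cancel_left₀ hy.ne']
  -- orthonormality of W
  have hWW : ∀ t u : ℤ, (inner ℂ (W t) (W u) : ℂ) = if t = u then 1 else 0 := by
    intro t u
    rw [hW_def]
    simp only
    rw [inner_smul_left, inner_smul_right, SincAux.inner_phi hπ0 le_rfl, Complex.conj_ofReal]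
    have harg : ((u:ℝ) - t) * Real.pi = ((u - t : ℤ) : ℝ) * Real.pi := by push_cast; ring
    rw [harg, SincAux.sinc_int_mul_pi]
    by_cases h : t = u
    · subst h
      rw [if_pos (sub_self t), if_pos rfl]
      norm_cast
      rw [show (2 : ℝ) * Real.pi * 1 = (2*Real.pi) * 1 by ring]
      exact hsq (2*Real.pi) 1 (by positivity)
    · rw [if_neg (sub_ne_zero.mpr (Ne.symm h)), if_neg h]
      simp
  have hΩne : Ω ≠ 0 := hΩ0.ne'
  -- orthonormality of E
  have hEE : ∀ k l : ℤ, (inner ℂ (E k) (E l) : ℂ) = if k = l then 1 else 0 := by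
    intro k l
    rw [hE_def]
    simp only
    rw [inner_smul_left, inner_smul_right, SincAux.inner_phi hΩ0 le_rfl, Complex.conj_ofReal]
    have harg : (-((l:ℝ)*Real.pi/Ω) - -((k:ℝ)*Real.pi/Ω)) * Ω = ((k - l : ℤ) : ℝ) * Real.pi := by
      push_cast
      field_simp
      ring
    rw [harg, SincAux.sinc_int_mul_pi]
    by_cases h : k = l
    · subst h
      rw [if_pos (sub_self k), if_pos rfl]
      norm_cast
      rw [show (2 : ℝ) * Ω * 1 = (2*Ω) * 1 by ring]
      exact hsq (2*Ω) 1 (by positivity)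
    · rw [if_neg (sub_ne_zero.mpr h), if_neg h]
      simp
  -- cross inner products
  have hEW : ∀ k t : ℤ, (inner ℂ (E k) (W t) : ℂ)
      = ((r * sinc ((k:ℝ) * Real.pi + Ω * t) : ℝ) : ℂ) := by
    intro k t
    rw [hE_def, hW_def]
    simp only
    rw [inner_smul_left, inner_smul_right, SincAux.inner_phi hΩ0 hΩπ, Complex.conj_ofReal]
    have harg : ((t:ℝ) - -((k:ℝ)*Real.pi/Ω)) * Ω = (k:ℝ) * Real.pi + Ω * t := by
      field_simp
      ring
    rw [harg]
    norm_cast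
    have hgen : ∀ A B c : ℝ, A ≠ 0 → B ≠ 0 → A * B * r = c → A⁻¹ * (B⁻¹ * c) = r := by
      intro A B c hA hB h
      rw [← h]
      field_simp
    have hscal : (Real.sqrt (2*Ω))⁻¹ * ((Real.sqrt (2*Real.pi))⁻¹ * (2*Ω)) = r := by
      refine hgen _ _ _ ((Real.sqrt_pos.mpr (by positivity)).ne')
        ((Real.sqrt_pos.mpr (by positivity)).ne') ?_
      rw [hr_def, ← Real.sqrt_mul (by positivity), ← Real.sqrt_mul (by positivity)]
      rw [show 2*Ω*(2*Real.pi)*(Ω/Real.pi) = (2*Ω)^2 by field_simp]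
      exact Real.sqrt_sq (by positivity)
    calc (Real.sqrt (2*Ω))⁻¹ * ((Real.sqrt (2*Real.pi))⁻¹
          * (2*Ω*sinc ((k:ℝ) * Real.pi + Ω * t)))
        = ((Real.sqrt (2*Ω))⁻¹ * ((Real.sqrt (2*Real.pi))⁻¹ * (2*Ω)))
            * sinc ((k:ℝ) * Real.pi + Ω * t) := by ring
      _ = r * sinc ((k:ℝ) * Real.pi + Ω * t) := by rw [hscal]
  have hWo : Orthonormal ℂ W := orthonormal_iff_ite.mpr hWW
  have hEo : Orthonormal ℂ E := orthonormal_iff_ite.mpr hEE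
  -- the ℓ² element
  have hx2 : Summable fun t : ℤ => ‖x t‖ ^ (2 : ENNReal).toReal := by
    have he : ∀ t : ℤ, ‖x t‖ ^ (2 : ENNReal).toReal = norm (x t) ^ 2 := by
      intro t
      rw [show ((2 : ENNReal).toReal) = ((2 : ℕ) : ℝ) by norm_num, Real.rpow_natCast]
    exact (summable_congr he).mpr hx
  have hxl : Memℓp x 2 := memℓp_gen hx2
  set X : lp (fun _ : ℤ => ℂ) 2 := ⟨x, hxl⟩ with hX_def
  set f : H := hWo.orthogonalFamily.linearIsometry X with hf_def
  have hf : HasSum (fun t : ℤ => x t • W t) f := by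
    have h := hWo.orthogonalFamily.hasSum_linearIsometry X
    simpa [LinearIsometry.toSpanSingleton_apply] using h
  have hnf : ‖f‖ ^ 2 = ∑' t : ℤ, norm (x t) ^ 2 := by
    rw [hf_def, LinearIsometry.norm_map]
    have h := lp.norm_rpow_eq_tsum (p := 2) (by norm_num) X
    have h2 : ((2 : ENNReal).toReal) = ((2 : ℕ) : ℝ) := by norm_num
    rw [h2, Real.rpow_natCast] at h
    rw [h]
    refine tsum_congr fun t => ?_
    rw [Real.rpow_natCast]
  have hrc : ((r : ℝ) : ℂ) ≠ 0 := by exact_mod_cast hr0.ne'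
  -- inner products with f
  have hfk : ∀ k : ℤ, HasSum (fun t : ℤ => x t * (inner ℂ (E k) (W t) : ℂ))
      (inner ℂ (E k) f : ℂ) := by
    intro k
    have h := (innerSL ℂ (E k)).hasSum hf
    simpa [inner_smul_right] using h
  have hS : ∀ k : ℤ, HasSum
      (fun t : ℤ => ((sinc ((k:ℝ) * Real.pi + Ω * t) : ℝ) : ℂ) * x t)
      (((r : ℝ) : ℂ)⁻¹ * (inner ℂ (E k) f : ℂ)) := by
    intro k
    have h := (hfk k).mul_left (((r : ℝ) : ℂ)⁻¹)
    have he : (fun t : ℤ => ((r : ℝ) : ℂ)⁻¹ * (x t * (inner ℂ (E k) (W t) : ℂ)))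
        = fun t : ℤ => ((sinc ((k:ℝ) * Real.pi + Ω * t) : ℝ) : ℂ) * x t := by
      funext t
      rw [hEW]
      push_cast
      field_simp
    rwa [he] at h
  have hSval : ∀ k : ℤ, (inner ℂ (E k) f : ℂ)
      = ((r : ℝ) : ℂ) * ∑' t : ℤ, ((sinc ((k:ℝ) * Real.pi + Ω * t) : ℝ) : ℂ) * x t := by
    intro k
    rw [(hS k).tsum_eq]
    field_simp
  have hΩπpos : 0 < Ω / Real.pi := div_pos hΩ0 hπ0
  have hkey : ∀ k : ℤ,
      norm (((Ω / Real.pi : ℝ) : ℂ) *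
        ∑' t : ℤ, ((sinc ((k : ℝ) * Real.pi + Ω * t)) : ℂ) * x t) ^ 2
      = (Ω / Real.pi) * ‖(inner ℂ (E k) f : ℂ)‖ ^ 2 := by
    intro k
    rw [hSval k]
    simp only [norm_mul, Complex.norm_real, Real.norm_eq_abs, mul_pow,
      abs_of_pos hΩπpos, abs_of_pos hr0, hr2]
    ring
  refine ⟨?_, ?_, ?_⟩
  · -- absolute convergence for each k
    intro k
    have hbes := hWo.inner_products_summable (x := E k)
    have h1 : (fun t : ℤ => ‖(inner ℂ (W t) (E k) : ℂ)‖ ^ 2)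
        = fun t : ℤ => r ^ 2 * (sinc ((k:ℝ) * Real.pi + Ω * t)) ^ 2 := by
      funext t
      rw [norm_inner_symm, hEW, Complex.norm_real, Real.norm_eq_abs, _root_.sq_abs, mul_pow]
    rw [h1] at hbes
    have hsinc2 : Summable fun t : ℤ => (sinc ((k:ℝ) * Real.pi + Ω * t)) ^ 2 := by
      have h := hbes.mul_left ((r ^ 2)⁻¹)
      simpa [inv_mul_cancel_left₀ (pow_ne_zero 2 hr0.ne')] using h
    refine Summable.of_nonneg_of_le (fun t => norm_nonneg _) (fun t => ?_)
      ((hsinc2.add hx).div_const 2)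
    rw [norm_mul, Complex.norm_real, Real.norm_eq_abs]
    nlinarith [sq_nonneg (|sinc ((k:ℝ) * Real.pi + Ω * t)| - ‖x t‖),
      _root_.sq_abs (sinc ((k:ℝ) * Real.pi + Ω * t)),
      norm_nonneg (x t),
      abs_nonneg (sinc ((k:ℝ) * Real.pi + Ω * t))]
  · -- ℓ² summability
    have hsum2 : Summable fun k : ℤ => (Ω / Real.pi) * ‖(inner ℂ (E k) f : ℂ)‖ ^ 2 :=
      (hEo.inner_products_summable (x := f)).mul_left _
    exact (summable_congr hkey).mpr hsum2
  · -- the norm bound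
    calc ∑' k : ℤ, norm (((Ω / Real.pi : ℝ) : ℂ) *
          ∑' t : ℤ, ((sinc ((k : ℝ) * Real.pi + Ω * t)) : ℂ) * x t) ^ 2
        = ∑' k : ℤ, (Ω / Real.pi) * ‖(inner ℂ (E k) f : ℂ)‖ ^ 2 := tsum_congr hkey
      _ = (Ω / Real.pi) * ∑' k : ℤ, ‖(inner ℂ (E k) f : ℂ)‖ ^ 2 := tsum_mul_left
      _ ≤ (Ω / Real.pi) * ‖f‖ ^ 2 :=
          mul_le_mul_of_nonneg_left (hEo.tsum_inner_products_le f) hΩπpos.le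
      _ = (Ω / Real.pi) * ∑' t : ℤ, norm (x t) ^ 2 := by rw [hnf]
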